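/- arXiv:2005.06152 — 2 statements merged into one kernel-verified Lean document; each statement's English description precedes it below -/
import Mathlib

section
/- Let c be a proper edge coloring of a simple graph G, let u be a vertex, and let u_i ≠ u_j be two vertices of degree 2 adjacent to u, with c(u u_i) = i, c(u u_j) = j and i ≠ j. Suppose that for some color α ∉ {i, j}, G contains a cycle through the edge u u_i whose edges are alternately colored α and i, and a cycle through the edge u u_j whose edges are alternately colored α and j. Let c′ be obtained from c by swapping the colors of u u_i and u u_j (so c′(u u_i) = j and c′(u u_j) = i, all other edges unchanged). Then: c′ is a proper edge coloring of G; under c′, G contains no cycle through u u_i whose edges are alternately colored α and j and no cycle through u u_j whose edges are alternately colored α and i; and every cycle of G that is bichromatic under c′ is already bichromatic under c. -/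
variable {V : Type*}

/-- A proper edge coloring: any two distinct edges sharing an endpoint receive
different colors. -/
def ProperEdgeColoring (G : SimpleGraph V) (c : Sym2 V → ℕ) : Prop :=
  ∀ e₁ ∈ G.edgeSet, ∀ e₂ ∈ G.edgeSet, e₁ ≠ e₂ → (∃ x, x ∈ e₁ ∧ x ∈ e₂) → c e₁ ≠ c e₂

/-- There is a cycle of `G` through the edge `e` all of whose edges are colored `a` or `b`
(under a proper coloring, this says its edges are alternately colored `a` and `b`). -/
def CycleThroughWithColors (G : SimpleGraph V) (c : Sym2 V → ℕ) (e : Sym2 V)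
    (a b : ℕ) : Prop :=
  ∃ (v : V) (w : G.Walk v v), w.IsCycle ∧ e ∈ w.edges ∧ ∀ f ∈ w.edges, c f = a ∨ c f = b

open SimpleGraph in
/-- A cycle starting at `x` passes through two distinct neighbors of `x`. -/
private lemma cycle_start_two_nbrs {H : SimpleGraph V} {x : V} (p : H.Walk x x)
    (hp : p.IsCycle) : ∃ y z, y ≠ z ∧ s(x, y) ∈ p.edges ∧ s(x, z) ∈ p.edges := by
  cases p with
  | nil => exact absurd hp Walk.IsCycle.not_of_nil
  | cons h q =>
    rename_i y₀
    obtain ⟨z₀, h₂, r, hr⟩ := Walk.exists_eq_cons_of_ne h.ne q.reverse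
    have hz₀mem : s(x, z₀) ∈ q.edges := by
      have : s(x, z₀) ∈ q.reverse.edges := by
        rw [hr, Walk.edges_cons]; exact List.mem_cons_self
      rw [Walk.edges_reverse] at this
      exact List.mem_reverse.mp this
    have hndup := hp.edges_nodup
    rw [Walk.edges_cons] at hndup
    have hfirst_notin : s(x, y₀) ∉ q.edges := (List.nodup_cons.mp hndup).1
    refine ⟨y₀, z₀, ?_, ?_, ?_⟩
    · intro hEq
      subst hEq
      exact hfirst_notin hz₀mem
    · rw [Walk.edges_cons]; exact List.mem_cons_self
    · rw [Walk.edges_cons]; exact List.mem_cons_of_mem _ hz₀mem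

open SimpleGraph in
/-- Any vertex on a cycle has two distinct neighbors along the cycle. -/
private lemma cycle_two_nbrs [DecidableEq V] {H : SimpleGraph V} {v x : V} {C : H.Walk v v}
    (hC : C.IsCycle) (hx : x ∈ C.support) :
    ∃ y z, y ≠ z ∧ s(x, y) ∈ C.edges ∧ s(x, z) ∈ C.edges := by
  obtain ⟨y, z, hyz, hy, hz⟩ := cycle_start_two_nbrs (C.rotate x hx) (hC.rotate hx)
  have hmem := (C.rotate_edges x hx).mem_iff (a := s(x, y))
  have hmem' := (C.rotate_edges x hx).mem_iff (a := s(x, z))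
  exact ⟨y, z, hyz, hmem.mp hy, hmem'.mp hz⟩

open SimpleGraph in
/-- Walking along a walk all of whose edges except `s(a,b)` lie in `H` gives
`H`-reachability information. -/
private lemma reach_aux {G H : SimpleGraph V} {a b : V} :
    ∀ {x y : V} (p : G.Walk x y), p.edges.Nodup → s(a, b) ∈ p.edges →
    (∀ f ∈ p.edges, f ≠ s(a, b) → f ∈ H.edgeSet) →
    (H.Reachable x a ∧ H.Reachable b y) ∨ (H.Reachable x b ∧ H.Reachable a y) := by
  intro x y p
  induction p with
  | nil => intro _ hmem _; simp at hmem
  | @cons u' v' w' h q ih =>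
    intro hnd hmem hH
    rw [Walk.edges_cons] at hnd hmem hH
    by_cases he : s(u', v') = s(a, b)
    · have hq : ∀ f ∈ q.edges, f ∈ H.edgeSet := by
        intro f hf
        refine hH f (List.mem_cons_of_mem _ hf) ?_
        intro hfe
        exact (List.nodup_cons.mp hnd).1 (by rwa [he, ← hfe])
      have hR : H.Reachable v' w' := ⟨q.transfer H hq⟩
      rw [Sym2.eq_iff] at he
      rcases he with ⟨rfl, rfl⟩ | ⟨rfl, rfl⟩
      · exact Or.inl ⟨Reachable.refl _, hR⟩
      · exact Or.inr ⟨Reachable.refl _, hR⟩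
    · have hfirst : H.Adj u' v' := by
        have := hH _ (List.mem_cons_self) he
        rwa [SimpleGraph.mem_edgeSet] at this
      have hmem' : s(a, b) ∈ q.edges := by
        rcases List.mem_cons.mp hmem with h' | h'
        · exact absurd h'.symm he
        · exact h'
      rcases ih (List.nodup_cons.mp hnd).2 hmem'
          (fun f hf => hH f (List.mem_cons_of_mem _ hf)) with ⟨h1, h2⟩ | ⟨h1, h2⟩
      · exact Or.inl ⟨hfirst.reachable.trans h1, h2⟩
      · exact Or.inr ⟨hfirst.reachable.trans h1, h2⟩

open SimpleGraph in
/-- In a graph of maximum degree at most 2, every vertex reachable from a cycle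
vertex lies on the cycle. -/
private lemma cycle_closure [DecidableEq V] {H : SimpleGraph V} {v x z : V} {C : H.Walk v v} (hC : C.IsCycle)
    (hdeg : ∀ a b d e : V, H.Adj a b → H.Adj a d → H.Adj a e → b = d ∨ b = e ∨ d = e)
    (hx : x ∈ C.support) (hr : H.Reachable x z) : z ∈ C.support := by
  have step : ∀ a m, a ∈ C.support → H.Adj a m → m ∈ C.support := by
    intro a m ha hadj
    obtain ⟨y₁, y₂, h12, he1, he2⟩ := cycle_two_nbrs hC ha
    have ha1 : H.Adj a y₁ := C.adj_of_mem_edges he1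
    have ha2 : H.Adj a y₂ := C.adj_of_mem_edges he2
    rcases hdeg a m y₁ y₂ hadj ha1 ha2 with rfl | rfl | h
    · exact C.snd_mem_support_of_mem_edges he1
    · exact C.snd_mem_support_of_mem_edges he2
    · exact absurd h h12
  obtain ⟨p⟩ := hr
  have main : ∀ (a b : V) (p : H.Walk a b), a ∈ C.support → b ∈ C.support := by
    intro a b p
    induction p with
    | nil => exact id
    | cons h q ih => exact fun ha => ih (step _ _ ha h)
  exact main x z p hx

open SimpleGraph in
/-- A degree-2 vertex has exactly two neighbors. -/
private lemma deg2_nbrs {G : SimpleGraph V} [Fintype V] [DecidableEq V] [DecidableRel G.Adj]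
    {t u y : V} (hdeg : G.degree t = 2) (hu : G.Adj t u) (hy : G.Adj t y) (huy : u ≠ y) :
    ∀ z, G.Adj t z → z = u ∨ z = y := by
  intro z hz
  by_contra hcon
  push_neg at hcon
  obtain ⟨hzu, hzy⟩ := hcon
  have hsub : ({u, y, z} : Finset V) ⊆ G.neighborFinset t := by
    intro w hw
    simp only [Finset.mem_insert, Finset.mem_singleton] at hw
    rw [SimpleGraph.mem_neighborFinset]
    rcases hw with rfl | rfl | rfl
    · exact hu
    · exact hy
    · exact hz
  have hcard : ({u, y, z} : Finset V).card = 3 := by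
    rw [Finset.card_insert_of_notMem (by simp [huy, Ne.symm hzu]),
      Finset.card_insert_of_notMem (by simp [Ne.symm hzy]), Finset.card_singleton]
  have hle := Finset.card_le_card hsub
  rw [hcard, SimpleGraph.card_neighborFinset_eq_degree, hdeg] at hle
  omega

open SimpleGraph in
/-- The key Kempe-chain lemma: if `t` is a degree-2 vertex with `c s(u,t) = β ∉ {α, γ}`,
`u` lies on an `(α,γ)`-colored cycle, and there is a cycle through `s(u,t)` whose other
edges are colored `α` or `γ`, then we get a contradiction. -/
private lemma key_lemma [Fintype V] [DecidableEq V] (G : SimpleGraph V) [DecidableRel G.Adj]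
    (c : Sym2 V → ℕ) (hc : ProperEdgeColoring G c)
    (u t : V) (β γ α : ℕ)
    (hadj : G.Adj u t) (hdeg2 : G.degree t = 2) (hct : c s(u, t) = β)
    (hαβ : α ≠ β) (hγβ : γ ≠ β)
    (hC : ∃ (v : V) (C : G.Walk v v), C.IsCycle ∧ u ∈ C.support ∧
      ∀ f ∈ C.edges, c f = α ∨ c f = γ)
    (hw : ∃ (v : V) (w : G.Walk v v), w.IsCycle ∧ s(u, t) ∈ w.edges ∧
      ∀ f ∈ w.edges, f ≠ s(u, t) → c f = α ∨ c f = γ) : False := by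
  classical
  set H : SimpleGraph V :=
    { Adj := fun x y => G.Adj x y ∧ (c s(x, y) = α ∨ c s(x, y) = γ),
      symm := by
        constructor
        intro x y hxy
        exact ⟨hxy.1.symm, by rw [Sym2.eq_swap]; exact hxy.2⟩,
      loopless := ⟨fun x h => G.loopless.irrefl x h.1⟩ } with hHdef
  have hHadj : ∀ x y : V, H.Adj x y ↔ (G.Adj x y ∧ (c s(x, y) = α ∨ c s(x, y) = γ)) :=
    fun _ _ => Iff.rfl
  -- max degree 2 in H
  have hHdeg : ∀ a b d e : V, H.Adj a b → H.Adj a d → H.Adj a e → b = d ∨ b = e ∨ d = e := by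
    intro a b d e hb hd he
    by_contra hcon
    push_neg at hcon
    obtain ⟨hbd, hbe, hde⟩ := hcon
    have edist : ∀ p q : V, G.Adj a p → p ≠ q → s(a, p) ≠ s(a, q) := by
      intro p q hp hpq hEq
      rw [Sym2.eq_iff] at hEq
      rcases hEq with ⟨_, h⟩ | ⟨h1, h2⟩
      · exact hpq h
      · exact G.loopless.irrefl a (h2 ▸ hp)
    have hshb : ∀ p : V, a ∈ s(a, p) := fun p => Sym2.mem_mk_left a p
    have h12 := hc s(a, b) ((SimpleGraph.mem_edgeSet _).mpr hb.1) s(a, d)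
      ((SimpleGraph.mem_edgeSet _).mpr hd.1) (edist b d hb.1 hbd) ⟨a, hshb b, hshb d⟩
    have h13 := hc s(a, b) ((SimpleGraph.mem_edgeSet _).mpr hb.1) s(a, e)
      ((SimpleGraph.mem_edgeSet _).mpr he.1) (edist b e hb.1 hbe) ⟨a, hshb b, hshb e⟩
    have h23 := hc s(a, d) ((SimpleGraph.mem_edgeSet _).mpr hd.1) s(a, e)
      ((SimpleGraph.mem_edgeSet _).mpr he.1) (edist d e hd.1 hde) ⟨a, hshb d, hshb e⟩
    rcases hb.2 with h1 | h1 <;> rcases hd.2 with h2 | h2 <;> rcases he.2 with h3 | h3 <;>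
      first
        | exact h12 (h1.trans h2.symm)
        | exact h13 (h1.trans h3.symm)
        | exact h23 (h2.trans h3.symm)
  -- transfer the (α,γ) cycle through u to H
  obtain ⟨v₀, C, hCcyc, huC, hCcol⟩ := hC
  have hCH : ∀ e ∈ C.edges, e ∈ H.edgeSet := by
    intro e he
    have hG := C.edges_subset_edgeSet he
    have hcol := hCcol _ he
    clear he
    induction e using Sym2.ind with
    | _ x y =>
      exact (SimpleGraph.mem_edgeSet _).mpr ⟨(SimpleGraph.mem_edgeSet _).mp hG, hcol⟩
  have hCHcyc := hCcyc.transfer hCH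
  have huCH : u ∈ (C.transfer H hCH).support := by
    rw [SimpleGraph.Walk.support_transfer]; exact huC
  -- H-reachability from u to t via the hypothetical cycle
  obtain ⟨v₁, w, hwcyc, hwmem, hwcol⟩ := hw
  have hwH : ∀ f ∈ w.edges, f ≠ s(u, t) → f ∈ H.edgeSet := by
    intro f hf hne
    have hG := w.edges_subset_edgeSet hf
    have hcol := hwcol f hf hne
    clear hf hne
    induction f using Sym2.ind with
    | _ x y =>
      exact (SimpleGraph.mem_edgeSet _).mpr ⟨(SimpleGraph.mem_edgeSet _).mp hG, hcol⟩
  have hreach : H.Reachable u t := by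
    rcases reach_aux (H := H) w hwcyc.edges_nodup hwmem hwH with ⟨h1, h2⟩ | ⟨h1, h2⟩
    · exact (h2.trans h1).symm
    · exact h2.trans h1
  have htCH : t ∈ (C.transfer H hCH).support := cycle_closure hCHcyc hHdeg huCH hreach
  -- t has two distinct H-neighbors; contradiction with its degree
  obtain ⟨y₁, y₂, h12, he1, he2⟩ := cycle_two_nbrs hCHcyc htCH
  have ha1 : H.Adj t y₁ := (C.transfer H hCH).adj_of_mem_edges he1
  have ha2 : H.Adj t y₂ := (C.transfer H hCH).adj_of_mem_edges he2
  have hnu : ∀ y, H.Adj t y → y ≠ u := by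
    intro y hy hEq
    subst hEq
    have hcol := hy.2
    rw [Sym2.eq_swap, hct] at hcol
    rcases hcol with h | h
    · exact hαβ h.symm
    · exact hγβ h.symm
  have huniq := deg2_nbrs hdeg2 hadj.symm ha1.1 (Ne.symm (hnu y₁ ha1))
  rcases huniq y₂ ha2.1 with h | h
  · exact hnu y₂ ha2 h
  · exact h12 h.symm

/-- Swapping the colors of the edges `u uᵢ` and `u uⱼ` (where `uᵢ, uⱼ` are degree-2
neighbors of `u`, `c(u uᵢ) = i`, `c(u uⱼ) = j`, and there are an `(α, i)`-cycle through
`u uᵢ` and an `(α, j)`-cycle through `u uⱼ` for some `α ∉ {i, j}`) yields a proper edge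
coloring with no `(α, j)`-cycle through `u uᵢ` and no `(α, i)`-cycle through `u uⱼ`,
and introduces no new bichromatic cycle. -/
theorem stmt_3 [Fintype V] [DecidableEq V] (G : SimpleGraph V) [DecidableRel G.Adj]
    (c : Sym2 V → ℕ) (hc : ProperEdgeColoring G c)
    (u ui uj : V) (i j α : ℕ)
    (hadj_i : G.Adj u ui) (hadj_j : G.Adj u uj) (hne : ui ≠ uj)
    (hdi : G.degree ui = 2) (hdj : G.degree uj = 2)
    (hci : c s(u, ui) = i) (hcj : c s(u, uj) = j) (hij : i ≠ j)
    (hαi : α ≠ i) (hαj : α ≠ j)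
    (hcyci : CycleThroughWithColors G c s(u, ui) α i)
    (hcycj : CycleThroughWithColors G c s(u, uj) α j)
    (c' : Sym2 V → ℕ)
    (hc' : c' = fun e => if e = s(u, ui) then j else if e = s(u, uj) then i else c e) :
    ProperEdgeColoring G c' ∧
      ¬ CycleThroughWithColors G c' s(u, ui) α j ∧
      ¬ CycleThroughWithColors G c' s(u, uj) α i ∧
      ∀ (v : V) (w : G.Walk v v), w.IsCycle →
        (∃ a b : ℕ, ∀ e ∈ w.edges, c' e = a ∨ c' e = b) →
        ∃ a b : ℕ, ∀ e ∈ w.edges, c e = a ∨ c e = b := by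
  classical
  have huui : u ≠ ui := hadj_i.ne
  have huuj : u ≠ uj := hadj_j.ne
  have hsne : s(u, ui) ≠ s(u, uj) := by
    intro hEq
    rw [Sym2.eq_iff] at hEq
    rcases hEq with ⟨_, h⟩ | ⟨h, _⟩
    · exact hne h
    · exact huuj h
  have hcui' : c' s(u, ui) = j := by rw [hc']; simp
  have hcuj' : c' s(u, uj) = i := by rw [hc']; simp [Ne.symm hsne]
  have hother : ∀ e, e ≠ s(u, ui) → e ≠ s(u, uj) → c' e = c e := by
    intro e h1 h2; rw [hc']; simp [h1, h2]
  -- extract the second neighbor `yi` of `ui` (with edge colored α)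
  have extract : ∀ (t : V) (β : ℕ), G.Adj u t → G.degree t = 2 → c s(u, t) = β → α ≠ β →
      CycleThroughWithColors G c s(u, t) α β →
      ∃ y, G.Adj t y ∧ y ≠ u ∧ c s(t, y) = α ∧ (∀ z, G.Adj t z → z = u ∨ z = y) := by
    intro t β hadj hdeg2 hct hαβ hcyc
    obtain ⟨v₁, C₁, hC₁, hC₁mem, hC₁col⟩ := hcyc
    have htC₁ : t ∈ C₁.support := C₁.snd_mem_support_of_mem_edges hC₁mem
    obtain ⟨y₁, y₂, h12, he1, he2⟩ := cycle_two_nbrs hC₁ htC₁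
    have hpick : ∃ y, y ≠ u ∧ s(t, y) ∈ C₁.edges := by
      by_cases h : y₁ = u
      · refine ⟨y₂, ?_, he2⟩
        intro hEq; exact h12 (h.trans hEq.symm)
      · exact ⟨y₁, h, he1⟩
    obtain ⟨y, hyu, hyC⟩ := hpick
    have hGy : G.Adj t y := C₁.adj_of_mem_edges hyC
    have hne_edge : s(t, y) ≠ s(u, t) := by
      intro hEq
      rw [Sym2.eq_iff] at hEq
      rcases hEq with ⟨h1, _⟩ | ⟨_, h2⟩
      · exact hadj.ne h1.symm
      · exact hyu h2
    have hcy : c s(t, y) = α := by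
      rcases hC₁col _ hyC with h | h
      · exact h
      · exfalso
        refine hc s(t, y) ((SimpleGraph.mem_edgeSet _).mpr hGy) s(u, t)
          ((SimpleGraph.mem_edgeSet _).mpr hadj) hne_edge
          ⟨t, Sym2.mem_mk_left t y, Sym2.mem_mk_right u t⟩ ?_
        rw [h, hct]
    exact ⟨y, hGy, hyu, hcy, deg2_nbrs hdeg2 hadj.symm hGy (Ne.symm hyu)⟩
  obtain ⟨yi, hGyi, hyiu, hcyi, huniq_i⟩ :=
    extract ui i hadj_i hdi hci hαi hcyci
  obtain ⟨yj, hGyj, hyju, hcyj, huniq_j⟩ :=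
    extract uj j hadj_j hdj hcj hαj hcycj
  -- the edge s(ui, yi) is untouched by the swap, similarly s(uj, yj)
  have hyi_edge : c' s(ui, yi) = α := by
    rw [hother]
    · exact hcyi
    · intro hEq
      rw [Sym2.eq_iff] at hEq
      rcases hEq with ⟨h1, _⟩ | ⟨_, h2⟩
      · exact huui h1.symm
      · exact hyiu h2
    · intro hEq
      rw [Sym2.eq_iff] at hEq
      rcases hEq with ⟨h1, _⟩ | ⟨h1, _⟩
      · exact huui h1.symm
      · exact hne h1
  have hyj_edge : c' s(uj, yj) = α := by
    rw [hother]
    · exact hcyj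
    · intro hEq
      rw [Sym2.eq_iff] at hEq
      rcases hEq with ⟨h1, _⟩ | ⟨h1, _⟩
      · exact huuj h1.symm
      · exact hne h1.symm
    · intro hEq
      rw [Sym2.eq_iff] at hEq
      rcases hEq with ⟨h1, _⟩ | ⟨_, h2⟩
      · exact huuj h1.symm
      · exact hyju h2
  -- helper properness facts
  have key_j : ∀ e ∈ G.edgeSet, e ≠ s(u, ui) → (∃ x, x ∈ e ∧ x ∈ s(u, ui)) → c' e ≠ j := by
    rintro e he hne1 ⟨x, hxe, hxs⟩
    by_cases h2 : e = s(u, uj)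
    · subst h2; rw [hcuj']; exact hij
    · rw [hother e hne1 h2]
      rcases Sym2.mem_iff.mp hxs with hx | hx
      · have hue : u ∈ e := hx ▸ hxe
        have := hc e he s(u, uj) ((SimpleGraph.mem_edgeSet _).mpr hadj_j) h2
          ⟨u, hue, Sym2.mem_mk_left u uj⟩
        rw [hcj] at this; exact this
      · have huie : ui ∈ e := hx ▸ hxe
        obtain ⟨z, rfl⟩ := Sym2.mem_iff_exists.mp huie
        have hGz : G.Adj ui z := (SimpleGraph.mem_edgeSet _).mp he
        rcases huniq_i z hGz with rfl | rfl
        · exact absurd Sym2.eq_swap hne1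
        · rw [hcyi]; exact hαj
  have key_i : ∀ e ∈ G.edgeSet, e ≠ s(u, uj) → (∃ x, x ∈ e ∧ x ∈ s(u, uj)) → c' e ≠ i := by
    rintro e he hne1 ⟨x, hxe, hxs⟩
    by_cases h2 : e = s(u, ui)
    · subst h2; rw [hcui']; exact Ne.symm hij
    · rw [hother e h2 hne1]
      rcases Sym2.mem_iff.mp hxs with hx | hx
      · have hue : u ∈ e := hx ▸ hxe
        have := hc e he s(u, ui) ((SimpleGraph.mem_edgeSet _).mpr hadj_i) h2
          ⟨u, hue, Sym2.mem_mk_left u ui⟩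
        rw [hci] at this; exact this
      · have huje : uj ∈ e := hx ▸ hxe
        obtain ⟨z, rfl⟩ := Sym2.mem_iff_exists.mp huje
        have hGz : G.Adj uj z := (SimpleGraph.mem_edgeSet _).mp he
        rcases huniq_j z hGz with rfl | rfl
        · exact absurd Sym2.eq_swap hne1
        · rw [hcyj]; exact hαi
  -- Part 1: properness
  have part1 : ProperEdgeColoring G c' := by
    intro e₁ h₁ e₂ h₂ hne12 hshare
    obtain ⟨x, hx1, hx2⟩ := hshare
    by_cases k₁ : e₁ = s(u, ui)
    · subst k₁
      rw [hcui']
      intro hEq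
      exact key_j e₂ h₂ (fun h => hne12 h.symm) ⟨x, hx2, hx1⟩ hEq.symm
    · by_cases k₂ : e₂ = s(u, ui)
      · subst k₂
        rw [hcui']
        exact key_j e₁ h₁ k₁ ⟨x, hx1, hx2⟩
      · by_cases l₁ : e₁ = s(u, uj)
        · subst l₁
          rw [hcuj']
          intro hEq
          exact key_i e₂ h₂ (fun h => hne12 h.symm) ⟨x, hx2, hx1⟩ hEq.symm
        · by_cases l₂ : e₂ = s(u, uj)
          · subst l₂
            rw [hcuj']
            exact key_i e₁ h₁ l₁ ⟨x, hx1, hx2⟩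
          · rw [hother e₁ k₁ l₁, hother e₂ k₂ l₂]
            exact hc e₁ h₁ e₂ h₂ hne12 ⟨x, hx1, hx2⟩
  -- Part 2: no (α, j)-cycle through s(u, ui)
  have part2 : ¬ CycleThroughWithColors G c' s(u, ui) α j := by
    rintro ⟨v, w, hwc, hwm, hwcol⟩
    apply key_lemma G c hc u ui i j α hadj_i hdi hci hαi (Ne.symm hij)
    · obtain ⟨v₂, C₂, hC₂, hC₂m, hC₂col⟩ := hcycj
      exact ⟨v₂, C₂, hC₂, C₂.fst_mem_support_of_mem_edges hC₂m, hC₂col⟩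
    · refine ⟨v, w, hwc, hwm, ?_⟩
      intro f hf hfne
      have hfuj : f ≠ s(u, uj) := by
        rintro rfl
        rcases hwcol _ hf with h | h
        · rw [hcuj'] at h; exact hαi h.symm
        · rw [hcuj'] at h; exact hij h
      rw [← hother f hfne hfuj]
      exact hwcol f hf
  -- Part 2': no (α, i)-cycle through s(u, uj)
  have part2' : ¬ CycleThroughWithColors G c' s(u, uj) α i := by
    rintro ⟨v, w, hwc, hwm, hwcol⟩
    apply key_lemma G c hc u uj j i α hadj_j hdj hcj hαj hij
    · obtain ⟨v₂, C₂, hC₂, hC₂m, hC₂col⟩ := hcyci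
      exact ⟨v₂, C₂, hC₂, C₂.fst_mem_support_of_mem_edges hC₂m, hC₂col⟩
    · refine ⟨v, w, hwc, hwm, ?_⟩
      intro f hf hfne
      have hfui : f ≠ s(u, ui) := by
        rintro rfl
        rcases hwcol _ hf with h | h
        · rw [hcui'] at h; exact hαj h.symm
        · rw [hcui'] at h; exact hij h.symm
      rw [← hother f hfui hfne]
      exact hwcol f hf
  refine ⟨part1, part2, part2', ?_⟩
  -- Part 3: no new bichromatic cycles
  rintro v w hwc ⟨a, b, hab⟩
  by_cases h1 : s(u, ui) ∈ w.edges
  · exfalso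
    apply part2
    refine ⟨v, w, hwc, h1, ?_⟩
    have hj : j = a ∨ j = b := by
      have := hab _ h1; rwa [hcui'] at this
    have huiw : ui ∈ w.support := w.snd_mem_support_of_mem_edges h1
    obtain ⟨y₁, y₂, h12, he1, he2⟩ := cycle_two_nbrs hwc huiw
    have hpick : ∃ y, y ≠ u ∧ s(ui, y) ∈ w.edges := by
      by_cases h : y₁ = u
      · refine ⟨y₂, ?_, he2⟩
        intro hEq; exact h12 (h.trans hEq.symm)
      · exact ⟨y₁, h, he1⟩
    obtain ⟨y, hyu, hyC⟩ := hpick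
    have hGy : G.Adj ui y := w.adj_of_mem_edges hyC
    have hy_eq : y = yi := by
      rcases huniq_i y hGy with h | h
      · exact absurd h hyu
      · exact h
    subst hy_eq
    have hα : α = a ∨ α = b := by
      have := hab _ hyC; rwa [hyi_edge] at this
    intro f hf
    have h := hab f hf
    omega
  · by_cases h2 : s(u, uj) ∈ w.edges
    · exfalso
      apply part2'
      refine ⟨v, w, hwc, h2, ?_⟩
      have hi : i = a ∨ i = b := by
        have := hab _ h2; rwa [hcuj'] at this
      have hujw : uj ∈ w.support := w.snd_mem_support_of_mem_edges h2
      obtain ⟨y₁, y₂, h12, he1, he2⟩ := cycle_two_nbrs hwc hujw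
      have hpick : ∃ y, y ≠ u ∧ s(uj, y) ∈ w.edges := by
        by_cases h : y₁ = u
        · refine ⟨y₂, ?_, he2⟩
          intro hEq; exact h12 (h.trans hEq.symm)
        · exact ⟨y₁, h, he1⟩
      obtain ⟨y, hyu, hyC⟩ := hpick
      have hGy : G.Adj uj y := w.adj_of_mem_edges hyC
      have hy_eq : y = yj := by
        rcases huniq_j y hGy with h | h
        · exact absurd h hyu
        · exact h
      subst hy_eq
      have hα : α = a ∨ α = b := by
        have := hab _ hyC; rwa [hyj_edge] at this
      intro f hf
      have h := hab f hf
      omega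
    · refine ⟨a, b, fun e he => ?_⟩
      rw [← hother e (fun h => h1 (h ▸ he)) (fun h => h2 (h ▸ he))]
      exact hab e he
end

section
/- Let G be a simple 2-connected graph satisfying: (i) no vertex of degree 2 in G is adjacent to a vertex of degree at most 5; (ii) every vertex u of degree at least 6 that is adjacent to some 2-vertex satisfies n_2(u) + n_3(u) ≤ d(u) − 3; (iii) no vertex u of degree at least 6 adjacent to some 2-vertex satisfies both n_2(u) + n_3(u) = d(u) − 3 and n_3(u) ≤ 3. If u is a vertex of H with d_H(u) = 4 that has at least one neighbor of degree 3 in G, then d(u) = 4. -/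
variable {V : Type*} [Fintype V] [DecidableEq V]

/-- `G` is 2-connected: it is connected, has at least 3 vertices, and deleting any
single vertex leaves it connected. -/
def TwoConnected (G : SimpleGraph V) : Prop :=
  G.Connected ∧ 3 ≤ Fintype.card V ∧
    ∀ v : V, (G.induce {w : V | w ≠ v}).Connected

/-- `nk G u m` is the number of neighbors of `u` in `G` having degree exactly `m`. -/
def nk (G : SimpleGraph V) [DecidableRel G.Adj] (u : V) (m : ℕ) : ℕ :=
  ((G.neighborFinset u).filter fun w => G.degree w = m).card

/-- `delTwo G` is the graph `H` obtained from `G` by deleting all 2-vertices: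
it keeps exactly the edges of `G` joining two vertices of degree at least 3
(deleted vertices become isolated). -/
def delTwo (G : SimpleGraph V) [DecidableRel G.Adj] : SimpleGraph V where
  Adj x y := G.Adj x y ∧ 3 ≤ G.degree x ∧ 3 ≤ G.degree y
  symm := ⟨fun x y h => ⟨h.1.symm, h.2.2, h.2.1⟩⟩
  loopless := ⟨fun x h => G.irrefl h.1⟩

instance (G : SimpleGraph V) [DecidableRel G.Adj] : DecidableRel (delTwo G).Adj :=
  fun x y => inferInstanceAs (Decidable (G.Adj x y ∧ 3 ≤ G.degree x ∧ 3 ≤ G.degree y))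

/-- In a 2-connected graph, every vertex incident to an edge has degree at least 2. -/
lemma two_le_degree_of_adj (G : SimpleGraph V) [DecidableRel G.Adj]
    (h2c : TwoConnected G) {u t : V} (h : G.Adj u t) : 2 ≤ G.degree t := by
  by_contra hlt
  push_neg at hlt
  have hu : u ∈ G.neighborFinset t := by
    simpa [SimpleGraph.mem_neighborFinset] using h.symm
  have hsing : G.neighborFinset t = {u} := by
    refine Finset.eq_singleton_iff_unique_mem.mpr ⟨hu, fun w hw => ?_⟩
    by_contra hne
    have : 1 < (G.neighborFinset t).card := Finset.one_lt_card.mpr ⟨w, hw, u, hu, hne⟩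
    rw [SimpleGraph.card_neighborFinset_eq_degree] at this
    omega
  -- find a vertex distinct from t and u
  obtain ⟨v, hv⟩ : ∃ v : V, v ∉ ({t, u} : Finset V) := by
    by_contra hc
    push_neg at hc
    have : (Finset.univ : Finset V) ⊆ {t, u} := fun x _ => hc x
    have := Finset.card_le_card this
    have hle : ({t, u} : Finset V).card ≤ 2 := Finset.card_insert_le _ _ |>.trans (by simp)
    have h3 := h2c.2.1
    simp [Finset.card_univ] at this
    omega
  simp only [Finset.mem_insert, Finset.mem_singleton, not_or] at hv
  have htu : t ≠ u := h.symm.ne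
  have hconn := h2c.2.2 u
  have hreach := hconn.preconnected ⟨t, htu⟩ ⟨v, hv.2⟩
  obtain ⟨p⟩ := hreach
  cases p with
  | nil =>
      exact hv.1 rfl
  | cons hadj p' =>
      rename_i w
      have hGadj : G.Adj t w.1 := hadj
      have : w.1 ∈ G.neighborFinset t := by
        simpa [SimpleGraph.mem_neighborFinset] using hGadj
      rw [hsing] at this
      simp at this
      exact w.2 this

/-- In a 2-connected graph satisfying (i)–(iii): if `u` is a vertex of `H` with
`d_H(u) = 4` having at least one `G`-neighbor of degree 3, then `d(u) = 4`. -/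
theorem stmt_6 (G : SimpleGraph V) [DecidableRel G.Adj]
    (h2c : TwoConnected G)
    (hi : ∀ v w : V, G.Adj v w → G.degree v = 2 → ¬ G.degree w ≤ 5)
    (hii : ∀ z : V, 6 ≤ G.degree z → (∃ t, G.Adj z t ∧ G.degree t = 2) →
      nk G z 2 + nk G z 3 ≤ G.degree z - 3)
    (hiii : ∀ z : V, 6 ≤ G.degree z → (∃ t, G.Adj z t ∧ G.degree t = 2) →
      ¬ (nk G z 2 + nk G z 3 = G.degree z - 3 ∧ nk G z 3 ≤ 3)) :
    ∀ u : V, 3 ≤ G.degree u → (delTwo G).degree u = 4 → 1 ≤ nk G u 3 →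
      G.degree u = 4 := by
  intro u hu3 hH4 hnk3
  classical
  have hNH : (delTwo G).neighborFinset u
      = (G.neighborFinset u).filter (fun w => 3 ≤ G.degree w) := by
    ext w
    rw [SimpleGraph.mem_neighborFinset, Finset.mem_filter, SimpleGraph.mem_neighborFinset]
    simp [delTwo, hu3, and_comm]
  have hfilter4 : ((G.neighborFinset u).filter (fun w => 3 ≤ G.degree w)).card = 4 := by
    rw [← hNH]; exact hH4
  have hneg : (G.neighborFinset u).filter (fun w => ¬ 3 ≤ G.degree w)
      = (G.neighborFinset u).filter (fun w => G.degree w = 2) := by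
    apply Finset.filter_congr
    intro w hw
    have hadj : G.Adj u w := by simpa [SimpleGraph.mem_neighborFinset] using hw
    have h2 := two_le_degree_of_adj G h2c hadj
    constructor
    · intro hn; omega
    · intro he; omega
  have hsplit : G.degree u = 4 + nk G u 2 := by
    have hsum := Finset.card_filter_add_card_filter_not
      (s := G.neighborFinset u) (p := fun w => 3 ≤ G.degree w)
    rw [hfilter4, hneg] at hsum
    rw [SimpleGraph.degree, nk]; exact hsum.symm
  by_cases hz : nk G u 2 = 0
  · omega
  · exfalso
    obtain ⟨t, ht⟩ : ∃ t, t ∈ (G.neighborFinset u).filter (fun w => G.degree w = 2) :=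
      Finset.card_pos.mp (Nat.pos_of_ne_zero hz)
    simp only [Finset.mem_filter, SimpleGraph.mem_neighborFinset] at ht
    have h6 : 6 ≤ G.degree u := by
      have := hi t u ht.1.symm ht.2
      omega
    have hex : ∃ t, G.Adj u t ∧ G.degree t = 2 := ⟨t, ht.1, ht.2⟩
    have hb := hii u h6 hex
    exact hiii u h6 hex ⟨by omega, by omega⟩
end
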